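/- Every infinite path P = {Γ₁, Γ₂, …} in covtree starting at the root has a certificate: there exists an infinite (countable, past-finite) order C such that for every n, the set of n-stems of C equals Γₙ. -/

import Mathlib

/-- A finite labeled order: a partial order structure on `Fin n`. -/
abbrev FinOrd (n : ℕ) := PartialOrder (Fin n)

/-- Isomorphism of two orders on `Fin n`. -/
def OrdIso {n : ℕ} (p q : FinOrd n) : Prop :=
  Nonempty (p.le ≃r q.le)

instance ordSetoid (n : ℕ) : Setoid (FinOrd n) where
  r := OrdIso
  iseqv := by
    refine ⟨fun p => ⟨RelIso.refl _⟩, ?_, ?_⟩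
    · rintro p q ⟨e⟩; exact ⟨e.symm⟩
    · rintro p q r ⟨e⟩ ⟨f⟩; exact ⟨e.trans f⟩

/-- An `n`-order: an isomorphism class of partial orders of cardinality `n`. -/
def NOrder (n : ℕ) := Quotient (ordSetoid n)

/-- `B` (a partial order on `Fin n`) occurs as a stem (finite downward-closed
subcauset) in the partial order `p` on `α`. -/
def StemIn {n : ℕ} {α : Type*} (B : FinOrd n) (p : PartialOrder α) : Prop :=
  ∃ f : Fin n → α, Function.Injective f ∧
    (∀ i j : Fin n, B.le i j ↔ p.le (f i) (f j)) ∧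
    (∀ (i : Fin n) (y : α), p.lt y (f i) → ∃ j : Fin n, f j = y)

/-- The `n`-order `B` is a stem in the order `p`. -/
def QStemIn {n : ℕ} {α : Type*} (B : NOrder n) (p : PartialOrder α) : Prop :=
  ∃ b : FinOrd n, ⟦b⟧ = B ∧ StemIn b p

/-- The set of `k`-stems of `p`, as a set of `k`-orders. -/
def stems (k : ℕ) {α : Type*} (p : PartialOrder α) : Set (NOrder k) :=
  {B | QStemIn B p}

/-- Stem relation between unlabeled finite orders: `S` is a stem in `T`. -/
def NStemIn {n m : ℕ} (S : NOrder n) (T : NOrder m) : Prop :=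
  ∃ t : FinOrd m, ⟦t⟧ = T ∧ QStemIn S t

/-- An order is past-finite if every element has finitely many elements below it. -/
def PastFinite {α : Type*} (p : PartialOrder α) : Prop :=
  ∀ x : α, {y : α | p.lt y x}.Finite

/-- The operation sending a set of `n`-orders to the set of `(n-1)`-stems of its
elements. -/
def Ominus (n : ℕ) (Γ : Set (NOrder n)) : Set (NOrder (n - 1)) :=
  {B | ∃ A ∈ Γ, NStemIn B A}

/-- The `j`-fold iterate of `Ominus`. -/
def OminusIter : (j : ℕ) → (n : ℕ) → Set (NOrder n) → Set (NOrder (n - j))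
  | 0, _, Γ => Γ
  | j + 1, n, Γ => Ominus (n - j) (OminusIter j n Γ)

/-- `Γ` is a node of covtree at level `n`: it is nonempty and has a certificate,
i.e. a (finite or countably infinite) past-finite order whose set of `n`-stems
is exactly `Γ`. -/
def IsNode (n : ℕ) (Γ : Set (NOrder n)) : Prop :=
  Γ.Nonempty ∧ ∃ (α : Type) (p : PartialOrder α), Countable α ∧ PastFinite p ∧
    stems n p = Γ


/-- An infinite path in covtree, starting at the root: for each `n` a node of
covtree at level `n` (a nonempty set of `n`-orders admitting a certificate),
each node being directly below the next via the `O₋` operation.  (Level `0`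
carries the trivial node consisting of the empty order.) -/
structure CovPath where
  node : (n : ℕ) → Set (NOrder n)
  nonempty : ∀ n, (node n).Nonempty
  isNode : ∀ n, IsNode n (node n)
  link : ∀ n, Ominus (n + 1) (node (n + 1)) = node n


----------------------------------------------------------------
-- Auxiliary development
----------------------------------------------------------------

section Basics

instance finOrdFinite (n : ℕ) : Finite (FinOrd n) := by
  have h : Function.Injective (fun p : FinOrd n => (p.le : Fin n → Fin n → Prop)) := by
    intro p q h
    exact PartialOrder.ext (fun a b => by rw [show p.le = q.le from h])
  exact Finite.of_injective _ h

instance nOrderFinite (n : ℕ) : Finite (NOrder n) :=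
  Quotient.finite _

-- lt in terms of le for an arbitrary explicit partial order
theorem plt_iff {α : Type*} (p : PartialOrder α) (a b : α) :
    p.lt a b ↔ p.le a b ∧ ¬ p.le b a := @lt_iff_le_not_ge _ (@PartialOrder.toPreorder _ p) a b

theorem stemIn_refl {n : ℕ} (t : FinOrd n) : StemIn t t :=
  ⟨id, fun _ _ h => h, fun _ _ => Iff.rfl, fun _ y _ => ⟨y, rfl⟩⟩

theorem stem_lt_iff {n : ℕ} {α : Type*} {B : FinOrd n} {p : PartialOrder α}
    {f : Fin n → α} (hinj : Function.Injective f)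
    (hle : ∀ i j : Fin n, B.le i j ↔ p.le (f i) (f j)) (i j : Fin n) :
    B.lt i j ↔ p.lt (f i) (f j) := by
  rw [plt_iff, plt_iff, hle, hle]

theorem stemIn_trans {n m : ℕ} {α : Type*} {B : FinOrd n} {A : FinOrd m}
    {p : PartialOrder α} (h1 : StemIn B A) (h2 : StemIn A p) : StemIn B p := by
  obtain ⟨f, hf, hfle, hfd⟩ := h1
  obtain ⟨g, hg, hgle, hgd⟩ := h2
  refine ⟨g ∘ f, hg.comp hf, fun i j => (hfle i j).trans (hgle _ _), ?_⟩
  intro i y hy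
  obtain ⟨j, rfl⟩ := hgd (f i) y hy
  have hy' := (plt_iff p _ _).mp hy
  have : A.lt j (f i) := (plt_iff A _ _).mpr ⟨(hgle _ _).mpr hy'.1, fun h => hy'.2 ((hgle _ _).mp h)⟩
  obtain ⟨j', hj'⟩ := hfd i j this
  exact ⟨j', by simp only [Function.comp_apply, hj']⟩

-- the image of a stem is order-isomorphic ambient-reflecting; iso congruence
theorem stemIn_congr_left {n : ℕ} {α : Type*} {B B' : FinOrd n} {p : PartialOrder α}
    (e : B.le ≃r B'.le) (h : StemIn B' p) : StemIn B p := by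
  obtain ⟨f, hf, hfle, hfd⟩ := h
  refine ⟨f ∘ e, hf.comp e.toEquiv.injective, fun i j => ?_, fun i y hy => ?_⟩
  · simp only [Function.comp_apply]
    rw [← hfle]; exact (e.map_rel_iff (a := i) (b := j)).symm
  · obtain ⟨j, hj⟩ := hfd (e i) y hy
    exact ⟨e.symm j, by simp only [Function.comp_apply, Equiv.apply_symm_apply, RelIso.coe_fn_toEquiv] at *; rw [← hj]; simp⟩

theorem qStemIn_mk {n : ℕ} {α : Type*} (b : FinOrd n) (p : PartialOrder α) :
    QStemIn ⟦b⟧ p ↔ StemIn b p := by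
  constructor
  · rintro ⟨b', hb', h⟩
    obtain ⟨e⟩ := Quotient.exact hb'
    exact stemIn_congr_left e.symm h
  · intro h; exact ⟨b, rfl, h⟩

theorem stemIn_congr_right {n m : ℕ} {B : FinOrd n} {t t' : FinOrd m}
    (e : t.le ≃r t'.le) (h : StemIn B t) : StemIn B t' := by
  obtain ⟨f, hf, hfle, hfd⟩ := h
  refine ⟨(e : Fin m → Fin m) ∘ f, e.toEquiv.injective.comp hf, fun i j => ?_, fun i y hy => ?_⟩
  · simp only [Function.comp_apply]
    rw [hfle]; exact (e.map_rel_iff (a := f i) (b := f j)).symm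
  · simp only [Function.comp_apply] at hy
    have hy' := (plt_iff t' _ _).mp hy
    have h1 : t.le (e.symm y) (f i) := by
      rw [← e.map_rel_iff]; simpa using hy'.1
    have h2 : ¬ t.le (f i) (e.symm y) := by
      rw [← e.map_rel_iff]; simpa using hy'.2
    obtain ⟨j, hj⟩ := hfd i _ ((plt_iff t _ _).mpr ⟨h1, h2⟩)
    exact ⟨j, by simp only [Function.comp_apply, hj]; simp⟩

theorem stemIn_self_iso {n : ℕ} {B t : FinOrd n} (h : StemIn B t) : OrdIso B t := by
  obtain ⟨f, hf, hfle, _⟩ := h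
  have hbij : Function.Bijective f := Finite.injective_iff_bijective.mp hf
  exact ⟨RelIso.mk (Equiv.ofBijective f hbij) (by intro i j; exact (hfle i j).symm)⟩
end Basics

section Downsets
variable {α : Type*} (p : PartialOrder α)

/-- A downward-closed subset. -/
def IsDownset (E : Set α) : Prop := ∀ ⦃x⦄, x ∈ E → ∀ ⦃y⦄, p.lt y x → y ∈ E

theorem isDownset_union {E F : Set α} (hE : IsDownset p E) (hF : IsDownset p F) :
    IsDownset p (E ∪ F) := by
  rintro x (hx | hx) y hy
  · exact Or.inl (hE hx hy)
  · exact Or.inr (hF hx hy)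

theorem isDownset_range_of_stem {n : ℕ} {B : FinOrd n} {f : Fin n → α}
    (hfd : ∀ (i : Fin n) (y : α), p.lt y (f i) → ∃ j : Fin n, f j = y) :
    IsDownset p (Set.range f) := by
  rintro x ⟨i, rfl⟩ y hy
  obtain ⟨j, hj⟩ := hfd i y hy
  exact ⟨j, hj⟩

/-- The induced order on `Fin n` along an injection. -/
def induce {n : ℕ} (f : Fin n → α) (hf : Function.Injective f) : FinOrd n where
  le i j := p.le (f i) (f j)
  le_refl i := p.le_refl _
  le_trans i j k := p.le_trans _ _ _
  le_antisymm i j h h' := hf (p.le_antisymm _ _ h h')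
  lt i j := p.lt (f i) (f j)
  lt_iff_le_not_ge i j := plt_iff p _ _

theorem induce_le {n : ℕ} (f : Fin n → α) (hf : Function.Injective f) (i j : Fin n) :
    (induce p f hf).le i j ↔ p.le (f i) (f j) := Iff.rfl

theorem stemIn_induce {n : ℕ} {f : Fin n → α} (hf : Function.Injective f)
    (hd : IsDownset p (Set.range f)) : StemIn (induce p f hf) p := by
  refine ⟨f, hf, fun i j => Iff.rfl, fun i y hy => ?_⟩
  exact hd ⟨i, rfl⟩ hy

/-- existence of an element outside a small finite set -/
theorem exists_not_mem {N : ℕ} (g : Fin N → α) (hg : Function.Injective g)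
    {E : Set α} (hE : E.Finite) (hcard : E.ncard < N) : ∃ x, x ∉ E := by
  by_contra h
  push_neg at h
  have h1 : Set.range g ⊆ E := fun x _ => h x
  have := Set.ncard_le_ncard h1 hE
  rw [show Set.range g = g '' Set.univ by simp [Set.image_univ],
    Set.ncard_image_of_injective _ hg, Set.ncard_univ, Nat.card_eq_fintype_card,
    Fintype.card_fin] at this
  omega

/-- minimal new element: an element outside a downset all of whose
predecessors are in the downset -/
theorem exists_min_outside (hp : PastFinite p) {E : Set α} (hE : IsDownset p E)
    {x : α} (hx : x ∉ E) : ∃ z, z ∉ E ∧ ∀ y, p.lt y z → y ∈ E := by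
  classical
  letI := p
  set F : Set α := insert x {y | p.lt y x} \ E with hF
  have hFfin : F.Finite := (Set.Finite.insert x (hp x)).diff
  have hFne : F.Nonempty := ⟨x, Or.inl rfl, hx⟩
  obtain ⟨z, hzF, hzmin⟩ : ∃ z ∈ F, ∀ y ∈ F, id y ≤ id z → id z = id y := by
    obtain ⟨z, hz⟩ := hFfin.exists_minimal hFne
    exact ⟨z, hz.1, fun y hy hle => le_antisymm (hz.2 hy hle) hle⟩
  refine ⟨z, hzF.2, fun y hy => ?_⟩
  by_contra hyE
  have hyF : y ∈ F := by
    refine ⟨?_, hyE⟩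
    rcases hzF.1 with h | h
    · exact Or.inr (h ▸ hy)
    · exact Or.inr (lt_trans hy h)
  have := hzmin y hyF (le_of_lt hy)
  simp only [id] at this
  exact absurd hy (this ▸ lt_irrefl z)
end Downsets

section OCast

/-- transport a finite order along an equality of sizes -/
def ocast {n m : ℕ} (e : n = m) (t : FinOrd n) : FinOrd m := e ▸ t

theorem ocast_stemIn_left {n m : ℕ} (e : n = m) (t : FinOrd n) {α : Type*} (p : PartialOrder α) :
    StemIn (ocast e t) p ↔ StemIn t p := by subst e; rfl

theorem ocast_stemIn_right {n m k : ℕ} (e : n = m) (t : FinOrd n) (B : FinOrd k) :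
    StemIn B (ocast e t) ↔ StemIn B t := by subst e; rfl

theorem ocast_mem {n m : ℕ} (e : n = m) (t : FinOrd n) (S : ∀ j, Set (NOrder j)) :
    (⟦ocast e t⟧ : NOrder m) ∈ S m ↔ (⟦t⟧ : NOrder n) ∈ S n := by subst e; rfl

theorem ocast_qStemIn {n m k : ℕ} (e : n = m) (t : FinOrd n) {α : Type*}
    (A : NOrder k) : QStemIn A (ocast e t) ↔ QStemIn A t := by subst e; rfl

end OCast

section Extension
variable {α : Type*} (p : PartialOrder α)

theorem ncard_range {k : ℕ} {f : Fin k → α} (hf : Function.Injective f) :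
    (Set.range f).ncard = k := by
  rw [show Set.range f = f '' Set.univ by simp [Set.image_univ],
    Set.ncard_image_of_injective _ hf, Set.ncard_univ, Nat.card_eq_fintype_card,
    Fintype.card_fin]

/-- one-step extension of a stem inside an ambient past-finite order -/
theorem ext_one (hp : PastFinite p) {k N : ℕ} (g : Fin N → α) (hg : Function.Injective g)
    (hk : k < N) {B : FinOrd k} (h : StemIn B p) :
    ∃ B' : FinOrd (k + 1), StemIn B' p ∧ StemIn B B' := by
  obtain ⟨f, hf, hfle, hfd⟩ := h
  have hdown : IsDownset p (Set.range f) := isDownset_range_of_stem p (B := B) hfd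
  obtain ⟨x, hx⟩ := exists_not_mem g hg (Set.finite_range f)
    (by rw [ncard_range hf]; exact hk)
  obtain ⟨z, hz, hzmin⟩ := exists_min_outside p hp hdown hx
  set f' : Fin (k + 1) → α := Fin.snoc f z with hf'
  have hcs : ∀ i : Fin k, f' i.castSucc = f i := fun i => by simp [hf']
  have hlast : f' (Fin.last k) = z := by simp [hf']
  have hinj : Function.Injective f' := by
    intro a b hab
    induction a using Fin.lastCases with
    | last =>
      induction b using Fin.lastCases with
      | last => rfl
      | cast b => rw [hlast, hcs] at hab; exact absurd ⟨b, hab.symm⟩ hz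
    | cast a =>
      induction b using Fin.lastCases with
      | last => rw [hlast, hcs] at hab; exact absurd ⟨a, hab⟩ hz
      | cast b => rw [hcs, hcs] at hab; rw [hf hab]
  have hrange : Set.range f' = insert z (Set.range f) := by
    ext y
    constructor
    · rintro ⟨i, rfl⟩
      induction i using Fin.lastCases with
      | last => rw [hlast]; exact Or.inl rfl
      | cast i => rw [hcs]; exact Or.inr ⟨i, rfl⟩
    · rintro (rfl | ⟨i, rfl⟩)
      · exact ⟨Fin.last k, hlast⟩
      · exact ⟨i.castSucc, hcs i⟩
  have hdown' : IsDownset p (Set.range f') := by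
    rw [hrange]
    rintro w (rfl | hw) y hy
    · exact Or.inr (hzmin y hy)
    · exact Or.inr (hdown hw hy)
  refine ⟨induce p f' hinj, stemIn_induce p hinj hdown', ?_⟩
  refine ⟨Fin.castSucc, Fin.castSucc_injective k, fun i j => ?_, fun i y hy => ?_⟩
  · rw [hfle, induce_le, hcs, hcs]
  · -- hy : (induce p f' hinj).lt y i.castSucc, i.e. p.lt (f' y) (f' i.castSucc)
    have hy' : p.lt (f' y) (f i) := by rw [← hcs]; exact hy
    obtain ⟨j, hj⟩ := hfd i (f' y) hy'
    refine ⟨j, hinj ?_⟩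
    rw [hcs, hj]

/-- extend a stem by `d` elements inside an ambient past-finite order -/
theorem ext_many (hp : PastFinite p) {N : ℕ} (g : Fin N → α) (hg : Function.Injective g) :
    ∀ d k, k + d ≤ N → ∀ B : FinOrd k, StemIn B p →
      ∃ t : FinOrd (k + d), StemIn t p ∧ StemIn B t := by
  intro d
  induction d with
  | zero => exact fun k _ B hB => ⟨B, hB, stemIn_refl B⟩
  | succ d ih =>
    intro k hkd B hB
    obtain ⟨B', hB'p, hBB'⟩ := ext_one p hp g hg (by omega) hB
    obtain ⟨t, htp, hB't⟩ := ih (k + 1) (by omega) B' hB'p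
    refine ⟨ocast (by omega) t, (ocast_stemIn_left _ _ _).mpr htp,
      (ocast_stemIn_right _ _ _).mpr (stemIn_trans hBB' hB't)⟩

section PathLemmas

theorem pastFinite_of_finite {α : Type*} [Finite α] (p : PartialOrder α) : PastFinite p :=
  fun _ => Set.toFinite _

/-- stems of members of path nodes are members of lower path nodes -/
theorem stem_mem (P : CovPath) {m : ℕ} (t : FinOrd m) (ht : ⟦t⟧ ∈ P.node m) :
    ∀ d k, k + d = m → ∀ B : FinOrd k, StemIn B t → ⟦B⟧ ∈ P.node k := by
  intro d
  induction d with
  | zero =>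
    intro k hk B hB
    subst hk
    obtain ⟨e⟩ := stemIn_self_iso hB
    rwa [Quotient.sound (⟨e⟩ : OrdIso B t)]
  | succ d ih =>
    intro k hk B hB
    obtain ⟨B', hB't, hBB'⟩ := ext_one t (pastFinite_of_finite t) id
      (fun _ _ h => h) (by omega) hB
    have h1 : (⟦B'⟧ : NOrder (k + 1)) ∈ P.node (k + 1) := ih (k + 1) (by omega) B' hB't
    rw [← P.link k]
    exact ⟨⟦B'⟧, h1, ⟨B', rfl, (qStemIn_mk B B').mpr hBB'⟩⟩

/-- every member of a node extends to a member of any higher node -/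
theorem chain_up (P : CovPath) : ∀ d k (A : NOrder k), A ∈ P.node k →
    ∃ t : FinOrd (k + d), (⟦t⟧ : NOrder (k + d)) ∈ P.node (k + d) ∧ QStemIn A t := by
  intro d
  induction d with
  | zero =>
    intro k A hA
    obtain ⟨a, ha⟩ := Quotient.exists_rep A
    exact ⟨a, ha ▸ hA, ⟨a, ha, stemIn_refl a⟩⟩
  | succ d ih =>
    intro k A hA
    obtain ⟨t, ht, a, haA, hat⟩ := ih k A hA
    rw [← P.link (k + d)] at ht
    obtain ⟨T, hT, t'', hTeq, b, hbt, hbt''⟩ := ht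
    -- hbt : ⟦b⟧ = ⟦t⟧ , hbt'' : StemIn b t''
    obtain ⟨e⟩ := Quotient.exact hbt   -- e : b.le ≃r t.le
    have hab : StemIn a b := stemIn_congr_right e.symm hat
    exact ⟨t'', hTeq ▸ hT, ⟨a, haA, stemIn_trans hab hbt''⟩⟩

/-- a certificate of the level-`m` node of a path certifies all lower nodes -/
theorem cert_stems (P : CovPath) {α : Type*} (C : PartialOrder α) (hpf : PastFinite C)
    {m : ℕ} (hm : stems m C = P.node m) : ∀ k, k ≤ m → stems k C = P.node k := by
  intro k hk
  -- an injection of Fin m into α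
  obtain ⟨A, hA⟩ := P.nonempty m
  rw [← hm] at hA
  obtain ⟨t0, _, g, hg, -, -⟩ := hA
  ext B
  constructor
  · rintro ⟨b, rfl, hb⟩
    obtain ⟨t, htC, hbt⟩ := ext_many C hpf g hg (m - k) k (by omega) b hb
    have e : k + (m - k) = m := by omega
    have h1 : (⟦ocast e t⟧ : NOrder m) ∈ P.node m := by
      rw [← hm]
      exact ⟨ocast e t, rfl, (ocast_stemIn_left e t C).mpr htC⟩
    exact stem_mem P (ocast e t) h1 (m - k) k (by omega) b
      ((ocast_stemIn_right e t b).mpr hbt)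
  · intro hB
    obtain ⟨t, ht, a, haB, hat⟩ := chain_up P (m - k) k B hB
    have e : k + (m - k) = m := by omega
    have h1 : (⟦ocast e t⟧ : NOrder m) ∈ P.node m := (ocast_mem e t P.node).mpr ht
    rw [← hm] at h1
    obtain ⟨t1, ht1, ht1C⟩ := h1
    obtain ⟨e'⟩ := Quotient.exact ht1   -- e' : t1.le ≃r (ocast e t).le
    have hat1 : StemIn a t1 :=
      stemIn_congr_right e'.symm ((ocast_stemIn_right e t a).mpr hat)
    exact ⟨a, haB, stemIn_trans hat1 ht1C⟩
end PathLemmas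

section Pad
variable {α : Type*} (p : PartialOrder α)

theorem pad (hp : PastFinite p) {N : ℕ} (g : Fin N → α) (hg : Function.Injective g) :
    ∀ (j : ℕ) (E : Set α), E.Finite → IsDownset p E → E.ncard + j ≤ N →
      ∃ D : Set α, E ⊆ D ∧ D.Finite ∧ IsDownset p D ∧ D.ncard = E.ncard + j := by
  intro j
  induction j with
  | zero => exact fun E hEf hEd _ => ⟨E, subset_rfl, hEf, hEd, rfl⟩
  | succ j ih =>
    intro E hEf hEd hle
    obtain ⟨x, hx⟩ := exists_not_mem g hg hEf (by omega)
    obtain ⟨z, hz, hzmin⟩ := exists_min_outside p hp hEd hx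
    have hEd' : IsDownset p (insert z E) := by
      rintro w (rfl | hw) y hy
      · exact Or.inr (hzmin y hy)
      · exact Or.inr (hEd hw hy)
    have hcard : (insert z E).ncard = E.ncard + 1 := Set.ncard_insert_of_notMem hz hEf
    obtain ⟨D, hsub, hDf, hDd, hDc⟩ := ih (insert z E) (hEf.insert z) hEd' (by omega)
    exact ⟨D, (Set.subset_insert z E).trans hsub, hDf, hDd, by omega⟩
end Pad

section ExtendEquiv

theorem extend_to_equiv {s N : ℕ} (hsN : s ≤ N) {β : Type*} [Fintype β]
    (hcard : Fintype.card β = N) (f : Fin s → β) (hf : Function.Injective f) :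
    ∃ e : Fin N ≃ β, ∀ i : Fin s, e (Fin.castLE hsN i) = f i := by
  classical
  set R : Set β := Set.range f with hR
  have hcardR : Fintype.card ↥R = s := by
    have h := Fintype.card_congr (Equiv.ofInjective f hf)
    rw [Fintype.card_fin] at h
    exact h.symm
  have hcardRc : Fintype.card ↥(Rᶜ) = N - s := by
    rw [Fintype.card_compl_set, hcardR, hcard]
  let e1 : Fin s ≃ ↥R := Equiv.ofInjective f hf
  let e2 : Fin (N - s) ≃ ↥(Rᶜ) := (Fintype.equivFinOfCardEq hcardRc).symm
  let e : Fin N ≃ β :=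
    (finCongr (by omega : N = s + (N - s))).trans
      (finSumFinEquiv.symm.trans ((e1.sumCongr e2).trans (Equiv.Set.sumCompl R)))
  refine ⟨e, fun i => ?_⟩
  have h1 : (finCongr (by omega : N = s + (N - s))) (Fin.castLE hsN i)
      = Fin.castAdd (N - s) i := by
    apply Fin.ext; simp
  show ((finCongr _).trans (finSumFinEquiv.symm.trans ((e1.sumCongr e2).trans
    (Equiv.Set.sumCompl R)))) (Fin.castLE hsN i) = f i
  rw [Equiv.trans_apply, h1, Equiv.trans_apply, finSumFinEquiv_symm_apply_castAdd,
    Equiv.trans_apply]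
  show (Equiv.Set.sumCompl R) (Sum.inl (e1 i)) = f i
  rw [Equiv.Set.sumCompl_apply_inl]
  rfl
end ExtendEquiv

section Step
variable {αf : ℕ → Type} (pf : ∀ m, PartialOrder (αf m))

/-- invariant: `A` is a stem in infinitely many of the certificates -/
def CInv {s : ℕ} (A : FinOrd s) : Prop := {m' : ℕ | StemIn A (pf m')}.Infinite

/-- `A` sits inside `A'` as a stem via the canonical inclusion -/
def StemLE {s s' : ℕ} (h : s ≤ s') (A : FinOrd s) (A' : FinOrd s') : Prop :=
  (∀ i j, A.le i j ↔ A'.le (Fin.castLE h i) (Fin.castLE h j)) ∧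
  (∀ (i : Fin s) (z : Fin s'), A'.lt z (Fin.castLE h i) → ∃ j, Fin.castLE h j = z)

theorem stemLE_stemIn {s s' : ℕ} (h : s ≤ s') {A : FinOrd s} {A' : FinOrd s'}
    (hA : StemLE h A A') : StemIn A A' :=
  ⟨Fin.castLE h, Fin.castLE_injective h, hA.1, fun i y hy => hA.2 i y hy⟩

theorem step (P : CovPath) (hpf : ∀ m, PastFinite (pf m))
    (hst : ∀ m, stems m (pf m) = P.node m)
    {s k : ℕ} {A : FinOrd s} (hA : CInv pf A) {T : FinOrd k} (hT : ⟦T⟧ ∈ P.node k) :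
    ∃ A' : FinOrd (s + k + 1), CInv pf A' ∧
      StemLE (by omega) A A' ∧ StemIn T A' := by
  classical
  set n' : ℕ := s + k + 1 with hn'
  set S' : Set ℕ := {m' | StemIn A (pf m')} \ Set.Iio n' with hS'
  have hS'inf : S'.Infinite := hA.diff (Set.finite_Iio n')
  -- for every m' in S' we can build a suitable order on Fin n'
  have key : ∀ m' : ↥S', ∃ q : FinOrd n',
      StemIn q (pf m') ∧ StemLE (by omega : s ≤ n') A q ∧ StemIn T q := by
    rintro ⟨m', hm'S⟩
    obtain ⟨hm'stem, hm'ge⟩ := hm'S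
    simp only [Set.mem_Iio, not_lt] at hm'ge
    -- A is a stem of pf m'
    obtain ⟨fA, hfA, hfAle, hfAd⟩ := hm'stem
    -- T is a stem of pf m'
    have hkT : StemIn T (pf m') := by
      have hstk : stems k (pf m') = P.node k :=
        cert_stems P (pf m') (hpf m') (hst m') k (by omega)
      have : (⟦T⟧ : NOrder k) ∈ stems k (pf m') := by rw [hstk]; exact hT
      exact (qStemIn_mk T (pf m')).mp this
    obtain ⟨fT, hfT, hfTle, hfTd⟩ := hkT
    -- an injection of Fin m' into the certificate
    obtain ⟨A0, hA0⟩ := P.nonempty m'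
    rw [← hst m'] at hA0
    obtain ⟨t0, -, g, hg, -, -⟩ := hA0
    -- the union of the two stems
    set E : Set (αf m') := Set.range fA ∪ Set.range fT with hE
    have hEf : E.Finite := (Set.finite_range fA).union (Set.finite_range fT)
    have hEd : IsDownset (pf m') E :=
      isDownset_union _ (isDownset_range_of_stem _ (B := A) hfAd)
        (isDownset_range_of_stem _ (B := T) hfTd)
    have hEcard : E.ncard ≤ s + k := by
      calc E.ncard ≤ (Set.range fA).ncard + (Set.range fT).ncard := Set.ncard_union_le _ _
        _ = s + k := by rw [ncard_range hfA, ncard_range hfT]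
    -- pad to exact size n'
    obtain ⟨D, hDsub, hDf, hDd, hDcard⟩ := pad (pf m') (hpf m') g hg (n' - E.ncard)
      E hEf hEd (by omega)
    have hDcard' : D.ncard = n' := by omega
    haveI : Fintype ↥D := hDf.fintype
    have hDft : Fintype.card ↥D = n' := by
      rw [← Nat.card_eq_fintype_card, Nat.card_coe_set_eq, hDcard']
    -- extend the A-embedding to an enumeration of D
    have hfAD : ∀ i, fA i ∈ D := fun i => hDsub (Or.inl ⟨i, rfl⟩)
    have hfTD : ∀ i, fT i ∈ D := fun i => hDsub (Or.inr ⟨i, rfl⟩)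
    set fA' : Fin s → ↥D := fun i => ⟨fA i, hfAD i⟩ with hfA'
    have hfA'inj : Function.Injective fA' := fun a b hab =>
      hfA (congrArg Subtype.val hab)
    obtain ⟨e, he⟩ := extend_to_equiv (by omega : s ≤ n') hDft fA' hfA'inj
    set ι : Fin n' → αf m' := fun i => (e i : αf m') with hι
    have hιinj : Function.Injective ι := fun a b hab =>
      e.injective (Subtype.ext hab)
    have hιrange : Set.range ι = D := by
      ext x
      constructor
      · rintro ⟨i, rfl⟩; exact (e i).2
      · intro hx; exact ⟨e.symm ⟨x, hx⟩, by simp [hι]⟩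
    have hιcast : ∀ i : Fin s, ι (Fin.castLE (by omega) i) = fA i := fun i => by
      rw [hι]; simp only []; rw [he i]
    refine ⟨induce (pf m') ι hιinj, stemIn_induce _ hιinj (hιrange ▸ hDd), ⟨?_, ?_⟩, ?_⟩
    · intro i j
      rw [hfAle, induce_le, hιcast, hιcast]
    · intro i z hz
      have hz' : (pf m').lt (ι z) (fA i) := by rw [← hιcast i]; exact hz
      obtain ⟨j, hj⟩ := hfAd i (ι z) hz'
      exact ⟨j, hιinj (by rw [hιcast, hj])⟩
    · -- T is a stem of the induced order
      set fT' : Fin k → Fin n' := fun i => e.symm ⟨fT i, hfTD i⟩ with hfT'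
      have hιT : ∀ i, ι (fT' i) = fT i := fun i => by simp [hι, hfT']
      have hfT'inj : Function.Injective fT' := fun a b hab => by
        have := congrArg (fun z => (e z : αf m')) hab
        simp [hfT'] at this
        exact hfT this
      refine ⟨fT', hfT'inj, fun i j => ?_, fun i z hz => ?_⟩
      · rw [hfTle, induce_le, hιT, hιT]
      · have hz' : (pf m').lt (ι z) (fT i) := by rw [← hιT i]; exact hz
        obtain ⟨j, hj⟩ := hfTd i (ι z) hz'
        exact ⟨j, hιinj (by rw [hιT, hj])⟩
  -- pigeonhole: one q works for infinitely many m'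
  choose F hF1 hF2 hF3 using key
  haveI : Infinite ↥S' := hS'inf.to_subtype
  obtain ⟨q, hq⟩ := Finite.exists_infinite_fiber F
  refine ⟨q, ?_, ?_, ?_⟩
  · -- invariant
    have hinj : Function.Injective
        (fun x : ↥(F ⁻¹' {q}) => ((x : ↥S') : ℕ)) := by
      intro a b hab
      exact Subtype.ext (Subtype.ext hab)
    have hsub : Set.range (fun x : ↥(F ⁻¹' {q}) => ((x : ↥S') : ℕ))
        ⊆ {m' : ℕ | StemIn q (pf m')} := by
      rintro _ ⟨x, rfl⟩
      have hx : F x = q := x.2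
      have := hF1 x
      rw [hx] at this
      exact this
    have : (Set.range (fun x : ↥(F ⁻¹' {q}) => ((x : ↥S') : ℕ))).Infinite :=
      Set.infinite_range_of_injective hinj
    exact this.mono hsub
  · obtain ⟨x⟩ := (inferInstance : Infinite ↥(F ⁻¹' {q})).nonempty
    have hx : F x = q := x.2
    have := hF2 x
    rwa [hx] at this
  · obtain ⟨x⟩ := (inferInstance : Infinite ↥(F ⁻¹' {q})).nonempty
    have hx : F x = q := x.2
    have := hF3 x
    rwa [hx] at this
end Step

section ChainSec

theorem stemLE_trans {s1 s2 s3 : ℕ} {h1 : s1 ≤ s2} {h2 : s2 ≤ s3}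
    {A1 : FinOrd s1} {A2 : FinOrd s2} {A3 : FinOrd s3}
    (H1 : StemLE h1 A1 A2) (H2 : StemLE h2 A2 A3) : StemLE (h1.trans h2) A1 A3 := by
  have hcast : ∀ i : Fin s1, Fin.castLE h2 (Fin.castLE h1 i) = Fin.castLE (h1.trans h2) i :=
    fun i => rfl
  constructor
  · intro i j
    rw [H1.1, H2.1, hcast, hcast]
  · intro i z hz
    rw [← hcast] at hz
    obtain ⟨j, hj⟩ := H2.2 (Fin.castLE h1 i) z hz
    obtain ⟨j', hj'⟩ := H1.2 i j (by
      have : A3.lt (Fin.castLE h2 j) (Fin.castLE h2 (Fin.castLE h1 i)) := hj ▸ hz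
      have h1' := (plt_iff A3 _ _).mp this
      exact (plt_iff A2 _ _).mpr ⟨(H2.1 _ _).mpr h1'.1, fun hle => h1'.2 ((H2.1 _ _).mp hle)⟩)
    exact ⟨j', by rw [← hcast, hj', hj]⟩

variable {P : CovPath} {αf : ℕ → Type} (pf : ∀ m, PartialOrder (αf m))

/-- states of the recursive construction -/
abbrev St := Σ s : ℕ, FinOrd s

open Classical in
noncomputable def nextSt (τ : ℕ → Σ k : ℕ, {T : NOrder k // T ∈ P.node k})
    (x : St) (m : ℕ) : St :=
  if h : ∃ A' : FinOrd (x.1 + (τ m).1 + 1), CInv pf A' ∧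
      StemLE (by omega) x.2 A' ∧ StemIn (Quotient.out (τ m).2.1) A'
  then ⟨x.1 + (τ m).1 + 1, Classical.choose h⟩
  else ⟨x.1 + (τ m).1 + 1, inferInstanceAs (PartialOrder (Fin _))⟩

noncomputable def chainSt (τ : ℕ → Σ k : ℕ, {T : NOrder k // T ∈ P.node k}) : ℕ → St
  | 0 => ⟨0, inferInstanceAs (PartialOrder (Fin 0))⟩
  | m + 1 => nextSt pf τ (chainSt τ m) m

variable (τ : ℕ → Σ k : ℕ, {T : NOrder k // T ∈ P.node k})

theorem nextSt_fst (x : St) (m : ℕ) : (nextSt pf τ x m).1 = x.1 + (τ m).1 + 1 := by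
  rw [nextSt]; split <;> rfl

theorem chainSt_succ_fst (m : ℕ) :
    (chainSt pf τ (m + 1)).1 = (chainSt pf τ m).1 + (τ m).1 + 1 := nextSt_fst pf τ _ m

theorem chainSt_zero_inv : CInv pf (chainSt pf τ 0).2 := by
  have h : ∀ m', StemIn (chainSt pf τ 0).2 (pf m') := by
    intro m'
    exact ⟨Fin.elim0, fun a => a.elim0, fun i => i.elim0, fun i => i.elim0⟩
  have heq : {m' : ℕ | StemIn (chainSt pf τ 0).2 (pf m')} = Set.univ :=
    Set.eq_univ_of_forall h
  rw [CInv, heq]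
  exact Set.infinite_univ

theorem chainSt_inv (hpf : ∀ m, PastFinite (pf m))
    (hst : ∀ m, stems m (pf m) = P.node m) :
    ∀ m, CInv pf (chainSt pf τ m).2 ∧
      (m = 0 ∨ ∃ m₀, m = m₀ + 1 ∧
        (∃ hle : (chainSt pf τ m₀).1 ≤ (chainSt pf τ (m₀+1)).1,
          StemLE hle (chainSt pf τ m₀).2 (chainSt pf τ (m₀+1)).2) ∧
        StemIn (Quotient.out (τ m₀).2.1) (chainSt pf τ (m₀+1)).2) := by
  intro m
  induction m with
  | zero => exact ⟨chainSt_zero_inv pf τ, Or.inl rfl⟩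
  | succ m ih =>
    have hT : (⟦Quotient.out (τ m).2.1⟧ : NOrder (τ m).1) ∈ P.node (τ m).1 := by
      have h := (τ m).2.2; rwa [← Quotient.out_eq (τ m).2.1] at h
    have hex := step pf P hpf hst ih.1 hT
    have hch : chainSt pf τ (m + 1) = nextSt pf τ (chainSt pf τ m) m := rfl
    have hval : chainSt pf τ (m + 1) =
        ⟨(chainSt pf τ m).1 + (τ m).1 + 1, Classical.choose hex⟩ := by
      rw [hch, nextSt, dif_pos hex]
    obtain ⟨h1, h2, h3⟩ := Classical.choose_spec hex
    refine ⟨?_, Or.inr ⟨m, rfl, ?_, ?_⟩⟩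
    · rw [hval]; exact h1
    · rw [hval]
      refine ⟨?_, h2⟩
      show (chainSt pf τ m).1 ≤ (chainSt pf τ m).1 + (τ m).1 + 1
      omega
    · rw [hval]; exact h3
end ChainSec

section Colim
variable (s : ℕ → ℕ) (A : ∀ m, FinOrd (s m))
variable (hgrow : ∀ m, m ≤ s m) (hmono : Monotone s)
variable (hLE : ∀ m m' (h : m ≤ m'), StemLE (hmono h) (A m) (A m'))

include hgrow hmono hLE

theorem colim_cross (a b : ℕ) {M M' : ℕ} (ha : a < s M) (hb : b < s M)
    (ha' : a < s M') (hb' : b < s M') :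
    (A M).le ⟨a, ha⟩ ⟨b, hb⟩ ↔ (A M').le ⟨a, ha'⟩ ⟨b, hb'⟩ := by
  have h1 : M ≤ max M M' := le_max_left _ _
  have h2 : M' ≤ max M M' := le_max_right _ _
  have e1 := (hLE M (max M M') h1).1 ⟨a, ha⟩ ⟨b, hb⟩
  have e2 := (hLE M' (max M M') h2).1 ⟨a, ha'⟩ ⟨b, hb'⟩
  have c1 : Fin.castLE (hmono h1) (⟨a, ha⟩ : Fin (s M))
      = ⟨a, lt_of_lt_of_le ha (hmono h1)⟩ := rfl
  have c2 : Fin.castLE (hmono h1) (⟨b, hb⟩ : Fin (s M))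
      = ⟨b, lt_of_lt_of_le hb (hmono h1)⟩ := rfl
  rw [c1, c2] at e1
  have c3 : Fin.castLE (hmono h2) (⟨a, ha'⟩ : Fin (s M'))
      = ⟨a, lt_of_lt_of_le ha (hmono h1)⟩ := rfl
  have c4 : Fin.castLE (hmono h2) (⟨b, hb'⟩ : Fin (s M'))
      = ⟨b, lt_of_lt_of_le hb (hmono h1)⟩ := rfl
  rw [c3, c4] at e2
  rw [e1, e2]

/-- the colimit order on ℕ -/
def colim : PartialOrder ℕ where
  le a b := (A (max a b + 1)).le
    ⟨a, lt_of_lt_of_le (Nat.lt_succ_of_le (le_max_left a b)) (hgrow _)⟩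
    ⟨b, lt_of_lt_of_le (Nat.lt_succ_of_le (le_max_right a b)) (hgrow _)⟩
  lt a b := (A (max a b + 1)).lt
    ⟨a, lt_of_lt_of_le (Nat.lt_succ_of_le (le_max_left a b)) (hgrow _)⟩
    ⟨b, lt_of_lt_of_le (Nat.lt_succ_of_le (le_max_right a b)) (hgrow _)⟩
  lt_iff_le_not_ge a b := by
    show (A (max a b + 1)).lt _ _ ↔ (A (max a b + 1)).le _ _ ∧ ¬ (A (max b a + 1)).le _ _
    rw [plt_iff (A (max a b + 1))]
    constructor
    · rintro ⟨h1, h2⟩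
      exact ⟨h1, fun hc => h2 ((colim_cross s A hgrow hmono hLE b a _ _ _ _).mp hc)⟩
    · rintro ⟨h1, h2⟩
      exact ⟨h1, fun hc => h2 ((colim_cross s A hgrow hmono hLE b a _ _ _ _).mp hc)⟩
  le_refl a := (A _).le_refl _
  le_trans a b c hab hbc := by
    set L := max a (max b c) + 1 with hL
    have haL : a < s L := lt_of_lt_of_le (Nat.lt_succ_of_le (le_max_left _ _)) (hgrow _)
    have hbL : b < s L := lt_of_lt_of_le
      (Nat.lt_succ_of_le ((le_max_left _ _).trans (le_max_right _ _))) (hgrow _)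
    have hcL : c < s L := lt_of_lt_of_le
      (Nat.lt_succ_of_le ((le_max_right _ _).trans (le_max_right _ _))) (hgrow _)
    have hab' := (colim_cross s A hgrow hmono hLE a b _ _ haL hbL).mp hab
    have hbc' := (colim_cross s A hgrow hmono hLE b c _ _ hbL hcL).mp hbc
    have := (A L).le_trans _ _ _ hab' hbc'
    exact (colim_cross s A hgrow hmono hLE a c haL hcL _ _).mp this
  le_antisymm a b hab hba := by
    set L := max a b + 1 with hL
    have haL : a < s L := lt_of_lt_of_le (Nat.lt_succ_of_le (le_max_left _ _)) (hgrow _)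
    have hbL : b < s L := lt_of_lt_of_le (Nat.lt_succ_of_le (le_max_right _ _)) (hgrow _)
    have hab' := (colim_cross s A hgrow hmono hLE a b _ _ haL hbL).mp hab
    have hba' := (colim_cross s A hgrow hmono hLE b a _ _ hbL haL).mp hba
    have := (A L).le_antisymm _ _ hab' hba'
    exact congrArg Fin.val this

theorem colim_le_iff {M a b : ℕ} (ha : a < s M) (hb : b < s M) :
    (colim s A hgrow hmono hLE).le a b ↔ (A M).le ⟨a, ha⟩ ⟨b, hb⟩ :=
  colim_cross s A hgrow hmono hLE a b _ _ ha hb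

theorem colim_lt_iff {M a b : ℕ} (ha : a < s M) (hb : b < s M) :
    (colim s A hgrow hmono hLE).lt a b ↔ (A M).lt ⟨a, ha⟩ ⟨b, hb⟩ := by
  rw [plt_iff (colim s A hgrow hmono hLE) a b, plt_iff (A M)]
  rw [colim_le_iff s A hgrow hmono hLE ha hb, colim_le_iff s A hgrow hmono hLE hb ha]

theorem colim_down {M x y : ℕ} (hx : x < s M)
    (hyx : (colim s A hgrow hmono hLE).lt y x) : y < s M := by
  set K := max (max y x + 1) M with hK
  have hyK : y < s K := lt_of_lt_of_le
    (lt_of_lt_of_le (Nat.lt_succ_of_le (le_max_left _ _)) (le_max_left _ _)) (hgrow _)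
  have hxK : x < s K := lt_of_lt_of_le
    (lt_of_lt_of_le (Nat.lt_succ_of_le (le_max_right _ _)) (le_max_left _ _)) (hgrow _)
  have hlt : (A K).lt ⟨y, hyK⟩ ⟨x, hxK⟩ :=
    (colim_lt_iff s A hgrow hmono hLE hyK hxK).mp hyx
  have hMK : M ≤ K := le_max_right _ _
  have hc : Fin.castLE (hmono hMK) (⟨x, hx⟩ : Fin (s M)) = ⟨x, hxK⟩ := rfl
  obtain ⟨j, hj⟩ := (hLE M K hMK).2 ⟨x, hx⟩ ⟨y, hyK⟩ (by rw [hc]; exact hlt)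
  have hv : ((Fin.castLE (hmono hMK) j : Fin (s K)) : ℕ) = y := congrArg Fin.val hj
  rw [Fin.coe_castLE] at hv
  exact hv ▸ j.isLt

theorem stemIn_colim (M : ℕ) : StemIn (A M) (colim s A hgrow hmono hLE) := by
  refine ⟨Fin.val, Fin.val_injective, fun i j => ?_, fun i y hy => ?_⟩
  · rw [colim_le_iff s A hgrow hmono hLE i.isLt j.isLt]
  · have hy' : y < s M := colim_down s A hgrow hmono hLE i.isLt hy
    exact ⟨⟨y, hy'⟩, rfl⟩

theorem pastFinite_colim : PastFinite (colim s A hgrow hmono hLE) := by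
  intro x
  have hx : x < s (x + 1) := lt_of_lt_of_le (by omega) (hgrow _)
  apply Set.Finite.subset (Set.finite_Iio (s (x + 1)))
  intro y hy
  exact colim_down s A hgrow hmono hLE hx hy
end Colim

theorem stemLE_refl {n : ℕ} (h : n ≤ n) (A : FinOrd n) : StemLE h A A := by
  have hc : ∀ i : Fin n, Fin.castLE h i = i := fun i => rfl
  constructor
  · intro i j; rw [hc, hc]
  · intro i z hz; exact ⟨z, hc z⟩

theorem path_has_certificate' (P : CovPath) :
    ∃ (α : Type) (p : PartialOrder α), Countable α ∧ Infinite α ∧ PastFinite p ∧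
      ∀ n : ℕ, stems n p = P.node n := by
  classical
  choose αf pf hcnt hpf hst using fun m => (P.isNode m).2
  haveI : Nonempty (Σ k : ℕ, {T : NOrder k // T ∈ P.node k}) :=
    ⟨⟨0, ⟨(P.nonempty 0).choose, (P.nonempty 0).choose_spec⟩⟩⟩
  obtain ⟨τ, hτ⟩ := exists_surjective_nat (Σ k : ℕ, {T : NOrder k // T ∈ P.node k})
  set sfun : ℕ → ℕ := fun m => (chainSt pf τ m).1 with hsfun
  set Afun : ∀ m, FinOrd (sfun m) := fun m => (chainSt pf τ m).2 with hAfun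
  have hsucc : ∀ m, sfun (m + 1) = sfun m + (τ m).1 + 1 := chainSt_succ_fst pf τ
  have hinv : ∀ m, CInv pf (Afun m) := fun m => (chainSt_inv pf τ hpf hst m).1
  have hstep : ∀ m, (∃ hle : sfun m ≤ sfun (m + 1), StemLE hle (Afun m) (Afun (m + 1))) ∧
      StemIn (Quotient.out (τ m).2.1) (Afun (m + 1)) := by
    intro m
    obtain (h0 | ⟨m₀, he, h1, h2⟩) := (chainSt_inv pf τ hpf hst (m + 1)).2
    · exact absurd h0 (Nat.succ_ne_zero m)
    · obtain rfl : m₀ = m := by omega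
      exact ⟨h1, h2⟩
  have hgrow : ∀ m, m ≤ sfun m := by
    intro m
    induction m with
    | zero => exact Nat.zero_le _
    | succ m ih => rw [hsucc]; omega
  have hmono : Monotone sfun := monotone_nat_of_le_succ (fun m => by rw [hsucc]; omega)
  have hLE : ∀ m m' (h : m ≤ m'), StemLE (hmono h) (Afun m) (Afun m') := by
    intro m m' h
    induction m' , h using Nat.le_induction with
    | base => exact stemLE_refl _ _
    | succ m' hmm' ih =>
      obtain ⟨⟨hle, hst1⟩, -⟩ := hstep m'
      exact stemLE_trans ih hst1
  set p : PartialOrder ℕ := colim sfun Afun hgrow hmono hLE with hp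
  refine ⟨ℕ, p, inferInstance, inferInstance, pastFinite_colim sfun Afun hgrow hmono hLE, ?_⟩
  intro n
  ext B
  constructor
  · rintro ⟨b, rfl, f, hf, hfle, hfd⟩
    set M : ℕ := Finset.univ.sup f + 1 with hM
    have hfM : ∀ i, f i < sfun M := fun i =>
      lt_of_lt_of_le (Nat.lt_succ_of_le (Finset.le_sup (Finset.mem_univ i))) (hgrow M)
    set f' : Fin n → Fin (sfun M) := fun i => ⟨f i, hfM i⟩ with hf'
    have hbM : StemIn b (Afun M) := by
      refine ⟨f', fun a b hab => hf (congrArg Fin.val hab), fun i j => ?_, fun i z hz => ?_⟩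
      · rw [hfle]
        exact colim_le_iff sfun Afun hgrow hmono hLE (hfM i) (hfM j)
      · have hz' : p.lt z.val (f i) :=
          (colim_lt_iff sfun Afun hgrow hmono hLE z.isLt (hfM i)).mpr hz
        obtain ⟨j, hj⟩ := hfd i z.val hz'
        exact ⟨j, Fin.ext hj⟩
    have hex : ∃ m' ∈ {m' | StemIn (Afun M) (pf m')}, n < m' := by
      by_contra hc
      push_neg at hc
      exact (hinv M) ((Set.finite_Iic n).subset (fun x hx => hc x hx))
    obtain ⟨m', hm'mem, hm'gt⟩ := hex
    have hbm' : StemIn b (pf m') := stemIn_trans hbM hm'mem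
    have := cert_stems P (pf m') (hpf m') (hst m') n (by omega)
    rw [← this]
    exact ⟨b, rfl, hbm'⟩
  · intro hB
    obtain ⟨m, hm⟩ := hτ ⟨n, ⟨B, hB⟩⟩
    have hasT := (hstep m).2
    rw [hm] at hasT
    exact ⟨Quotient.out B, Quotient.out_eq B,
      stemIn_trans hasT (stemIn_colim sfun Afun hgrow hmono hLE (m + 1))⟩


/-- Every infinite path `P = {Γ₁, Γ₂, …}` in covtree starting
at the root has a certificate: there is an infinite, countable, past-finite
order whose set of `n`-stems equals `Γₙ` for every `n`. -/
theorem path_has_certificate (P : CovPath) :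
    ∃ (α : Type) (p : PartialOrder α), Countable α ∧ Infinite α ∧ PastFinite p ∧
      ∀ n : ℕ, stems n p = P.node n := by
  exact path_has_certificate' P
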